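/- The function f(u) = (exp_φ(u) - 1)/u (extended by f(0) = 1/2) is monotonically increasing on ℝ and satisfies 0 < f(u) < 1 for all u, with limits f(u) → 0 as u → -∞ and f(u) → 1 as u → +∞. -/

import Mathlib

/-- Key concavity inequality: for `0 < a ≤ b` on the same side of `1`,
`(a-1) * log b ≤ (b-1) * log a`. -/
lemma key_log_ineq {a b : ℝ} (ha : 0 < a) (hab : a ≤ b) (hside : 1 ≤ a ∨ b ≤ 1) :
    (a - 1) * Real.log b ≤ (b - 1) * Real.log a := by
  rcases eq_or_lt_of_le hab with rfl | hab
  · exact le_rfl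
  have hconc := strictConcaveOn_log_Ioi.concaveOn.2
  rcases hside with h1a | hb1
  · -- 1 ≤ a < b : a = s•1 + t•b with t = (a-1)/(b-1)
    have hb1 : 1 < b := lt_of_le_of_lt h1a hab
    have hbne : (0:ℝ) < b - 1 := by linarith
    have ht : (0:ℝ) ≤ (a - 1) / (b - 1) := div_nonneg (by linarith) hbne.le
    have hs : (0:ℝ) ≤ (b - a) / (b - 1) := div_nonneg (by linarith) hbne.le
    have hsum : (b - a) / (b - 1) + (a - 1) / (b - 1) = 1 := by
      field_simp
      ring
    have hcomb := hconc (Set.mem_Ioi.2 one_pos) (Set.mem_Ioi.2 (by linarith : (0:ℝ) < b))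
      hs ht hsum
    simp only [smul_eq_mul, Real.log_one, mul_zero, mul_one, zero_add] at hcomb
    have hx : (b - a) / (b - 1) + (a - 1) / (b - 1) * b = a := by
      field_simp; ring
    rw [hx] at hcomb
    calc (a - 1) * Real.log b = (b - 1) * ((a - 1) / (b - 1) * Real.log b) := by
          field_simp
      _ ≤ (b - 1) * Real.log a := by
          exact mul_le_mul_of_nonneg_left hcomb hbne.le
  · -- a < b ≤ 1 : b = s•a + t•1 with s = (1-b)/(1-a)
    have ha1 : a < 1 := lt_of_lt_of_le hab hb1
    have hane : (0:ℝ) < 1 - a := by linarith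
    have hs : (0:ℝ) ≤ (1 - b) / (1 - a) := div_nonneg (by linarith) hane.le
    have ht : (0:ℝ) ≤ (b - a) / (1 - a) := div_nonneg (by linarith) hane.le
    have hsum : (1 - b) / (1 - a) + (b - a) / (1 - a) = 1 := by
      field_simp
      ring
    have hcomb := hconc (Set.mem_Ioi.2 ha) (Set.mem_Ioi.2 one_pos) hs ht hsum
    simp only [smul_eq_mul, Real.log_one, mul_zero, mul_one, add_zero] at hcomb
    have hx : (1 - b) / (1 - a) * a + (b - a) / (1 - a) = b := by
      field_simp; ring
    rw [hx] at hcomb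
    have h2 : (1 - b) * Real.log a ≤ (1 - a) * Real.log b := by
      calc (1 - b) * Real.log a = (1 - a) * ((1 - b) / (1 - a) * Real.log a) := by
            field_simp
        _ ≤ (1 - a) * Real.log b := mul_le_mul_of_nonneg_left hcomb hane.le
    nlinarith [h2]

theorem diff_quotient_monotone (expφ : ℝ → ℝ) (hpos : ∀ u, 0 < expφ u)
    (hinv : ∀ u, expφ u - 1 + Real.log (expφ u) = u)
    (f : ℝ → ℝ) (hf : ∀ u : ℝ, u ≠ 0 → f u = (expφ u - 1) / u) (hf0 : f 0 = 1 / 2) :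
    Monotone f ∧ (∀ u : ℝ, 0 < f u ∧ f u < 1) ∧
    Filter.Tendsto f Filter.atBot (nhds 0) ∧
    Filter.Tendsto f Filter.atTop (nhds 1) := by
  -- sign facts
  have hgt : ∀ u, 0 < u → 1 < expφ u := by
    intro u hu
    by_contra h
    push_neg at h
    have hlog : Real.log (expφ u) ≤ 0 := Real.log_nonpos (hpos u).le h
    have := hinv u
    linarith
  have hlt : ∀ u, u < 0 → expφ u < 1 := by
    intro u hu
    by_contra h
    push_neg at h
    have hlog : 0 ≤ Real.log (expφ u) := Real.log_nonneg h
    have := hinv u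
    linarith
  have hlogle : ∀ u, Real.log (expφ u) ≤ expφ u - 1 :=
    fun u => Real.log_le_sub_one_of_pos (hpos u)
  -- half bounds
  have hhalf_neg : ∀ u, u < 0 → f u ≤ 1 / 2 := by
    intro u hu
    rw [hf u hu.ne]
    rw [div_le_iff_of_neg hu]
    have := hinv u; have := hlogle u
    nlinarith
  have hhalf_pos : ∀ u, 0 < u → 1 / 2 ≤ f u := by
    intro u hu
    rw [hf u hu.ne']
    rw [le_div_iff₀ hu]
    have := hinv u; have := hlogle u
    nlinarith
  -- positivity and <1
  have hbounds : ∀ u : ℝ, 0 < f u ∧ f u < 1 := by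
    intro u
    rcases lt_trichotomy u 0 with hu | rfl | hu
    · have hv1 := hlt u hu
      have hv0 := hpos u
      have hlog : Real.log (expφ u) < 0 := Real.log_neg hv0 hv1
      rw [hf u hu.ne]
      constructor
      · exact div_pos_of_neg_of_neg (by linarith) hu
      · rw [show (expφ u - 1) / u = (1 - expφ u) / (-u) by ring,
          div_lt_one (by linarith : (0:ℝ) < -u)]
        nlinarith [hinv u]
    · rw [hf0]; norm_num
    · have hv1 := hgt u hu
      have hlog : 0 < Real.log (expφ u) := Real.log_pos hv1
      rw [hf u hu.ne']
      constructor
      · exact div_pos (by linarith) hu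
      · rw [div_lt_one hu]
        nlinarith [hinv u]
  -- monotone
  have hmono : Monotone f := by
    intro a b hab
    rcases eq_or_lt_of_le hab with rfl | hab
    · exact le_rfl
    rcases lt_trichotomy b 0 with hb | rfl | hb
    · -- a < b < 0
      have ha : a < 0 := lt_trans hab hb
      have hva := hpos a; have hvb := hpos b
      have hva1 := hlt a ha; have hvb1 := hlt b hb
      have hla : Real.log (expφ a) < 0 := Real.log_neg hva hva1
      have hlb : Real.log (expφ b) < 0 := Real.log_neg hvb hvb1
      have hvab : expφ a ≤ expφ b := by
        by_contra h
        push_neg at h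
        have h2 : Real.log (expφ b) ≤ Real.log (expφ a) :=
          Real.log_le_log hvb h.le
        have := hinv a; have := hinv b
        linarith
      have hkey := key_log_ineq hva hvab (Or.inr hvb1.le)
      rw [hf a ha.ne, hf b hb.ne,
        show (expφ a - 1) / a = (1 - expφ a) / (-a) by ring,
        show (expφ b - 1) / b = (1 - expφ b) / (-b) by ring,
        div_le_div_iff₀ (by linarith : (0:ℝ) < -a) (by linarith : (0:ℝ) < -b)]
      have e1 : (1 - expφ a) * (-b)
          = (1 - expφ a) * (1 - expφ b) - (1 - expφ a) * Real.log (expφ b) := by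
        linear_combination (1 - expφ a) * (hinv b)
      have e2 : (1 - expφ b) * (-a)
          = (1 - expφ b) * (1 - expφ a) - (1 - expφ b) * Real.log (expφ a) := by
        linear_combination (1 - expφ b) * (hinv a)
      have hkey' : (1 - expφ b) * Real.log (expφ a) ≤ (1 - expφ a) * Real.log (expφ b) := by
        nlinarith [hkey]
      linarith [e1, e2, hkey']
    · exact le_trans (hhalf_neg a hab) (le_of_eq hf0.symm)
    · rcases lt_trichotomy a 0 with ha | rfl | ha
      · exact le_trans (hhalf_neg a ha) (hhalf_pos b hb)
      · exact le_trans (le_of_eq hf0) (hhalf_pos b hb)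
      · -- 0 < a < b
        have hva := hpos a; have hvb := hpos b
        have hva1 := hgt a ha; have hvb1 := hgt b hb
        have hla : 0 < Real.log (expφ a) := Real.log_pos hva1
        have hlb : 0 < Real.log (expφ b) := Real.log_pos hvb1
        have hvab : expφ a ≤ expφ b := by
          by_contra h
          push_neg at h
          have h2 : Real.log (expφ b) ≤ Real.log (expφ a) :=
            Real.log_le_log hvb h.le
          have := hinv a; have := hinv b
          linarith
        have hkey := key_log_ineq hva hvab (Or.inl hva1.le)
        rw [hf a ha.ne', hf b hb.ne', div_le_div_iff₀ ha hb]
        have e1 : (expφ a - 1) * b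
            = (expφ a - 1) * (expφ b - 1) + (expφ a - 1) * Real.log (expφ b) := by
          linear_combination (1 - expφ a) * (hinv b)
        have e2 : (expφ b - 1) * a
            = (expφ b - 1) * (expφ a - 1) + (expφ b - 1) * Real.log (expφ a) := by
          linear_combination (1 - expφ b) * (hinv a)
        linarith [e1, e2, hkey]
  refine ⟨hmono, hbounds, ?_, ?_⟩
  · -- tendsto atBot 0
    have hupper : Filter.Tendsto (fun u : ℝ => (-u)⁻¹) Filter.atBot (nhds 0) :=
      tendsto_inv_atTop_zero.comp Filter.tendsto_neg_atBot_atTop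
    apply tendsto_of_tendsto_of_tendsto_of_le_of_le' tendsto_const_nhds hupper
    · exact Filter.Eventually.of_forall (fun u => (hbounds u).1.le)
    · filter_upwards [Filter.eventually_lt_atBot 0] with u hu
      rw [hf u hu.ne]
      rw [div_le_iff_of_neg hu]
      have hv := hpos u
      have : (-u)⁻¹ * u = -1 := by
        rw [inv_neg, neg_mul, inv_mul_cancel₀ hu.ne]
      rw [this]
      linarith
  · -- tendsto atTop 1
    have hexp_top : Filter.Tendsto expφ Filter.atTop Filter.atTop := by
      have h1 : Filter.Tendsto (fun u : ℝ => (u + 1) / 2) Filter.atTop Filter.atTop :=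
        (Filter.tendsto_atTop_add_const_right _ 1 Filter.tendsto_id).atTop_div_const
          (by norm_num)
      refine Filter.tendsto_atTop_mono' _ ?_ h1
      filter_upwards with u
      have := hinv u; have := hlogle u
      show (u + 1) / 2 ≤ expφ u
      linarith
    have hlim : Filter.Tendsto (fun v : ℝ => Real.log v / (v - 1)) Filter.atTop (nhds 0) := by
      have h1 : Filter.Tendsto (fun v : ℝ => Real.log v / v) Filter.atTop (nhds 0) :=
        Real.isLittleO_log_id_atTop.tendsto_div_nhds_zero
      have h2 : Filter.Tendsto (fun v : ℝ => v / (v - 1)) Filter.atTop (nhds 1) := by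
        have h3 : Filter.Tendsto (fun v : ℝ => 1 + (v - 1)⁻¹) Filter.atTop (nhds 1) := by
          have h4 : Filter.Tendsto (fun v : ℝ => (v + -1)⁻¹) Filter.atTop (nhds 0) :=
            tendsto_inv_atTop_zero.comp
              (Filter.tendsto_atTop_add_const_right Filter.atTop (-1) Filter.tendsto_id)
          have h5 := (tendsto_const_nhds : Filter.Tendsto (fun _ : ℝ => (1:ℝ))
            Filter.atTop (nhds 1)).add h4
          simpa [Function.comp, sub_eq_add_neg] using h5
        apply h3.congr'
        filter_upwards [Filter.eventually_ge_atTop (2:ℝ)] with v hv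
        have hvne : v - 1 ≠ 0 := by linarith
        field_simp
        ring
      have h6 := h1.mul h2
      rw [zero_mul] at h6
      apply h6.congr'
      filter_upwards [Filter.eventually_ge_atTop (2:ℝ)] with v hv
      have hv0 : v ≠ 0 := by linarith
      show Real.log v / v * (v / (v - 1)) = Real.log v / (v - 1)
      rw [div_mul_div_comm, mul_comm (Real.log v) v, mul_div_mul_left _ _ hv0]
    have hcomp := hlim.comp hexp_top
    have hlow : Filter.Tendsto
        (fun u => 1 - Real.log (expφ u) / (expφ u - 1)) Filter.atTop (nhds 1) := by
      have := (tendsto_const_nhds : Filter.Tendsto (fun _ : ℝ => (1:ℝ))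
        Filter.atTop (nhds 1)).sub hcomp
      simpa using this
    apply tendsto_of_tendsto_of_tendsto_of_le_of_le' hlow tendsto_const_nhds
    · filter_upwards [Filter.eventually_gt_atTop (0:ℝ)] with u hu
      have hv1 := hgt u hu
      have hlv : 0 < Real.log (expφ u) := Real.log_pos hv1
      have hv1' : (0:ℝ) < expφ u - 1 := by linarith
      have huge : expφ u - 1 ≤ u := by have := hinv u; linarith
      have hu0 : 0 < u := hu
      have hd : Real.log (expφ u) / u ≤ Real.log (expφ u) / (expφ u - 1) :=
        (div_le_div_iff_of_pos_left hlv hu0 hv1').2 huge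
      have heq : (expφ u - 1) / u = 1 - Real.log (expφ u) / u := by
        field_simp
        linarith [hinv u]
      rw [hf u hu.ne', heq]
      linarith
    · exact Filter.Eventually.of_forall fun u => (hbounds u).2.le
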